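/- Let C ⊆ F_{q^m}^n be almost affine and fix x ∈ C. A subspace Y ≤ F_q^n is independent in the dual q-matroid M_C* if and only if there is no codeword c ∈ C \ {x} with supp(c − x) ≤ Y. Consequently, a subspace C' ≤ F_q^n is a circuit of M_C* if and only if C' = supp(c − x) for some x-minimal codeword c ∈ C \ {x}. -/

import Mathlib

set_option linter.unusedSectionVars false
set_option linter.unusedVariables false
set_option maxHeartbeats 1000000


open Submodule Module

variable (K L : Type) [Field K] [Fintype K] [Field L] [Fintype L] [Algebra K L]

/-- Orthogonal complement w.r.t. the standard dot product on `ι → K`. -/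
def stdPerp {ι : Type} [Fintype ι] (V : Submodule K (ι → K)) : Submodule K (ι → K) where
  carrier := {w | ∀ v ∈ V, ∑ j, v j * w j = 0}
  zero_mem' := by intro v hv; simp
  add_mem' := by
    intro a b ha hb v hv
    simp [Pi.add_apply, mul_add, Finset.sum_add_distrib, ha v hv, hb v hv]
  smul_mem' := by
    intro c a ha v hv
    simp only [Pi.smul_apply, smul_eq_mul, mul_left_comm]
    rw [← Finset.mul_sum, ha v hv, mul_zero]

/-- Extension of scalars: the `L`-span of a `K`-subspace of `ι → K` inside `ι → L`. -/
def extScalars {ι : Type} (W : Submodule K (ι → K)) : Submodule L (ι → L) :=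
  Submodule.span L ((fun (w : ι → K) (j : ι) => algebraMap K L (w j)) '' (W : Set (ι → K)))

/-- Image of the code `C` under the canonical projection `π_V`. -/
def projImage {ι : Type} [Fintype ι] (C : Set (ι → L)) (V : Submodule K (ι → K)) :
    Set ((ι → L) ⧸ extScalars K L (stdPerp K V)) :=
  Submodule.Quotient.mk '' C

/-- The rank function induced by a code: `ρ_C(V) = log_{q^m} |π_V(C)|`. -/
noncomputable def rho {ι : Type} [Fintype ι] (C : Set (ι → L)) (V : Submodule K (ι → K)) : ℕ :=
  Nat.log (Fintype.card L) (Nat.card (projImage K L C V))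

/-- `C` is an almost affine rank-metric code. -/
def AlmostAffine {ι : Type} [Fintype ι] (C : Set (ι → L)) : Prop :=
  ∀ V : Submodule K (ι → K), ∃ e : ℕ, Nat.card (projImage K L C V) = (Fintype.card L) ^ e

/-- Support of a vector `v ∈ L^ι` w.r.t. a `K`-basis `B` of `L`. -/
def supp {ι : Type} {m : ℕ} (B : Basis (Fin m) K L) (v : ι → L) : Submodule K (ι → K) :=
  Submodule.span K (Set.range fun i : Fin m => fun j : ι => B.repr (v j) i)

/-- The subcode `C(Z,x) = {c ∈ C : π_Z(c) = π_Z(x)}`. -/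
def subcode {ι : Type} [Fintype ι] (C : Set (ι → L)) (Z : Submodule K (ι → K)) (x : ι → L) :
    Set (ι → L) :=
  {c ∈ C | (Submodule.Quotient.mk (p := extScalars K L (stdPerp K Z)) c) =
      Submodule.Quotient.mk x}

/-- The `q`-matroid rank axioms (R1)–(R3). -/
def IsQMatroidRank {E : Type} [AddCommGroup E] [Module K E] (r : Submodule K E → ℕ) : Prop :=
  (∀ V : Submodule K E, r V ≤ finrank K V) ∧
  (∀ V W : Submodule K E, V ≤ W → r V ≤ r W) ∧
  (∀ V W : Submodule K E, r (V ⊔ W) + r (V ⊓ W) ≤ r V + r W)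

namespace Aux

variable {K} {n : ℕ}

lemma mem_stdPerp {V : Submodule K (Fin n → K)} {w : Fin n → K} :
    w ∈ stdPerp K V ↔ ∀ v ∈ V, ∑ j, v j * w j = 0 := Iff.rfl

/-- dot product bilinear form -/
noncomputable def dotForm : LinearMap.BilinForm K (Fin n → K) :=
  LinearMap.mk₂ K (fun v w => ∑ j, v j * w j)
    (by intro a b c; simp [add_mul, Finset.sum_add_distrib])
    (by intro a b c; simp [Finset.mul_sum, mul_assoc])
    (by intro a b c; simp [mul_add, Finset.sum_add_distrib])
    (by intro a b c; simp [Finset.mul_sum]; ring_nf; simp [mul_comm, mul_left_comm])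

@[simp] lemma dotForm_apply (v w : Fin n → K) : dotForm v w = ∑ j, v j * w j := rfl

lemma dotForm_symm : (dotForm (K := K) (n := n)).IsSymm := by
  refine ⟨?_⟩; intro v w; simp [mul_comm]

lemma dotForm_refl : (dotForm (K := K) (n := n)).IsRefl := dotForm_symm.isRefl

lemma dotForm_nondeg : (dotForm (K := K) (n := n)).Nondegenerate := by
  refine ⟨?_, ?_⟩ <;> intro v hv <;> funext i
  · have h := hv (Pi.single i 1)
    rw [dotForm_apply] at h
    simpa [Pi.single_apply, Finset.sum_ite_eq'] using h
  · have h := hv (Pi.single i 1)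
    rw [dotForm_apply] at h
    simpa [Pi.single_apply, ite_mul, Finset.sum_ite_eq'] using h

lemma stdPerp_eq_orthogonal (V : Submodule K (Fin n → K)) :
    stdPerp K V = dotForm.orthogonal V := rfl

lemma stdPerp_stdPerp (V : Submodule K (Fin n → K)) : stdPerp K (stdPerp K V) = V := by
  rw [stdPerp_eq_orthogonal, stdPerp_eq_orthogonal]
  exact LinearMap.BilinForm.orthogonal_orthogonal dotForm_nondeg dotForm_refl V

lemma stdPerp_antitone {V W : Submodule K (Fin n → K)} (h : V ≤ W) :
    stdPerp K W ≤ stdPerp K V := fun w hw v hv => hw v (h hv)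

lemma stdPerp_top : stdPerp K (⊤ : Submodule K (Fin n → K)) = ⊥ := by
  rw [eq_bot_iff]
  intro w hw
  have : ∀ i, w i = 0 := by
    intro i
    have := hw (Pi.single i 1) trivial
    simpa [Pi.single_apply, Finset.sum_eq_single i] using this
  simp [Submodule.mem_bot]; funext i; exact this i

lemma stdPerp_bot : stdPerp K (⊥ : Submodule K (Fin n → K)) = ⊤ := by
  rw [← stdPerp_top (K := K) (n := n), stdPerp_stdPerp]

end Aux

namespace Aux

variable {K L} {n m : ℕ} (B : Basis (Fin m) K L)

/-- the coefficient-extraction vector -/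
noncomputable def coeffVec (v : Fin n → L) (i : Fin m) : Fin n → K := fun j => B.repr (v j) i

lemma supp_le_iff {v : Fin n → L} {W : Submodule K (Fin n → K)} :
    supp K L B v ≤ W ↔ ∀ i, coeffVec B v i ∈ W := by
  constructor
  · intro h i; exact h (Submodule.subset_span ⟨i, rfl⟩)
  · intro h
    apply Submodule.span_le.2
    rintro _ ⟨i, rfl⟩
    exact h i

lemma extScalars_mono {W W' : Submodule K (Fin n → K)} (h : W ≤ W') :
    extScalars K L W ≤ extScalars K L W' :=
  Submodule.span_mono (Set.image_mono h)

lemma extScalars_bot : extScalars K L (⊥ : Submodule K (Fin n → K)) = ⊥ := by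
  rw [eq_bot_iff]
  apply Submodule.span_le.2
  rintro _ ⟨w, hw, rfl⟩
  rcases Submodule.mem_bot (R := K) |>.1 hw with rfl
  simp [Submodule.mem_bot]
  rfl

lemma mem_extScalars_iff {v : Fin n → L} {W : Submodule K (Fin n → K)} :
    v ∈ extScalars K L W ↔ ∀ i, coeffVec B v i ∈ W := by
  constructor
  · intro hv
    induction hv using Submodule.span_induction with
    | mem u hu =>
      rcases hu with ⟨w, hw, rfl⟩
      intro i
      have : coeffVec B (fun j => algebraMap K L (w j)) i = (B.repr 1 i) • w := by
        funext j
        simp [coeffVec, Algebra.algebraMap_eq_smul_one, mul_comm]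
      rw [this]
      exact W.smul_mem _ hw
    | zero =>
      intro i
      have : coeffVec B (0 : Fin n → L) i = 0 := by funext j; simp [coeffVec]
      rw [this]; exact W.zero_mem
    | add u w _ _ hu hw =>
      intro i
      have : coeffVec B (u + w) i = coeffVec B u i + coeffVec B w i := by
        funext j; simp [coeffVec]
      rw [this]; exact W.add_mem (hu i) (hw i)
    | smul l u _ hu =>
      intro i
      have key : coeffVec B (l • u) i
          = ∑ i' : Fin m, (B.repr (l * B i') i) • coeffVec B u i' := by
        funext j
        have expand : l * u j = ∑ i' : Fin m, B.repr (u j) i' • (l * B i') := by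
          conv_lhs => rw [← B.sum_repr (u j)]
          rw [Finset.mul_sum]
          congr 1; funext i'
          rw [mul_smul_comm]
        have : B.repr (l * u j) i
            = ∑ i' : Fin m, B.repr (u j) i' • B.repr (l * B i') i := by
          rw [expand, map_sum, Finsupp.finset_sum_apply]
          congr 1; funext i'
          rw [map_smul]; rfl
        simpa [coeffVec, Finset.sum_apply, smul_eq_mul, mul_comm] using this
      rw [key]
      exact Submodule.sum_mem _ fun i' _ => W.smul_mem _ (hu i')
  · intro h
    have : v = ∑ i : Fin m, (B i) • (fun j => algebraMap K L (coeffVec B v i j)) := by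
      funext j
      rw [Finset.sum_apply]
      conv_lhs => rw [← B.sum_repr (v j)]
      congr 1; funext i
      simp [coeffVec, Algebra.smul_def, mul_comm]
    rw [this]
    apply Submodule.sum_mem
    intro i _
    exact Submodule.smul_mem _ _ (Submodule.subset_span ⟨coeffVec B v i, h i, rfl⟩)

lemma mem_extScalars_iff_supp_le {v : Fin n → L} {W : Submodule K (Fin n → K)} :
    v ∈ extScalars K L W ↔ supp K L B v ≤ W := by
  rw [mem_extScalars_iff B, supp_le_iff B]

lemma extScalars_span_singleton_le (w : Fin n → K) :
    extScalars K L (Submodule.span K {w}) ≤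
      Submodule.span L {fun j => algebraMap K L (w j)} := by
  apply Submodule.span_le.2
  rintro _ ⟨u, hu, rfl⟩
  rcases Submodule.mem_span_singleton.1 hu with ⟨a, rfl⟩
  apply Submodule.mem_span_singleton.2
  refine ⟨algebraMap K L a, ?_⟩
  funext j
  simp [Algebra.smul_def]

end Aux

namespace Aux

lemma sum_const_eq_forall_eq {β : Type*} {U : Finset β} {f : β → ℕ} {t : ℕ}
    (hub : ∀ y ∈ U, f y ≤ t) (hsum : ∑ y ∈ U, f y = U.card * t) :
    ∀ y ∈ U, f y = t := by
  have : ∑ y ∈ U, f y = ∑ y ∈ U, t := by simpa [Finset.sum_const, Nat.smul_one_eq_cast] using hsum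
  exact fun y hy => (Finset.sum_eq_sum_iff_of_le hub).1 this y hy

lemma sum_one_eq_forall_eq {β : Type*} {U : Finset β} {f : β → ℕ}
    (hlb : ∀ y ∈ U, 1 ≤ f y) (hsum : ∑ y ∈ U, f y = U.card) :
    ∀ y ∈ U, f y = 1 := by
  have : ∑ y ∈ U, (1 : ℕ) = ∑ y ∈ U, f y := by simp [hsum]
  exact fun y hy => ((Finset.sum_eq_sum_iff_of_le hlb).1 this y hy).symm

/-- Key step: fibers of `g ∘ f` on `S` are uniform given fibers of `f` are uniform. -/
lemma step_lemma {α β γ : Type*} [DecidableEq α] [DecidableEq β] [DecidableEq γ]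
    (S : Finset α) (f : α → β) (g : β → γ) (q a b : ℕ) (hq : 1 < q)
    (h1 : ∀ c ∈ S, (S.filter fun c' => f c' = f c).card * (S.image f).card = S.card)
    (h2 : ∀ c ∈ S, ((S.image f).filter fun u => g u = g (f c)).card ≤ q)
    (h3 : (S.image f).card = q ^ a)
    (h4 : ((S.image f).image g).card = q ^ b) :
    ∀ c ∈ S, (S.filter fun c' => g (f c') = g (f c)).card * ((S.image f).image g).card
      = S.card := by
  intro c hc
  set T := S.image f with hT
  set U := T.image g with hU
  have hTsum : T.card = ∑ y ∈ U, (T.filter fun u => g u = y).card :=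
    Finset.card_eq_sum_card_fiberwise (fun u hu => Finset.mem_image_of_mem g hu)
  have hlb : ∀ y ∈ U, 1 ≤ (T.filter fun u => g u = y).card := by
    intro y hy
    rcases Finset.mem_image.1 hy with ⟨u, hu, rfl⟩
    exact Finset.card_pos.2 ⟨u, Finset.mem_filter.2 ⟨hu, rfl⟩⟩
  have hub : ∀ y ∈ U, (T.filter fun u => g u = y).card ≤ q := by
    intro y hy
    rcases Finset.mem_image.1 hy with ⟨u, hu, rfl⟩
    rcases Finset.mem_image.1 hu with ⟨c₀, hc₀, rfl⟩
    exact h2 c₀ hc₀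
  have hba : b ≤ a := by
    rw [← Nat.pow_le_pow_iff_right hq, ← h3, ← h4]
    exact Finset.card_image_le
  have hab : a ≤ b + 1 := by
    rw [← Nat.pow_le_pow_iff_right hq, ← h3]
    calc T.card = ∑ y ∈ U, (T.filter fun u => g u = y).card := hTsum
      _ ≤ ∑ y ∈ U, q := Finset.sum_le_sum hub
      _ = U.card * q := by simp [Finset.sum_const, mul_comm]
      _ = q ^ (b + 1) := by rw [h4, pow_succ]
  -- uniform fibers of g on T
  have huniform : ∀ y ∈ U, (T.filter fun u => g u = y).card * U.card = T.card := by
    rcases (by omega : a = b ∨ a = b + 1) with hcase | hcase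
    · have : ∑ y ∈ U, (T.filter fun u => g u = y).card = U.card := by
        rw [← hTsum, h3, h4, hcase]
      intro y hy
      rw [sum_one_eq_forall_eq hlb this y hy, one_mul, h3, h4, hcase]
    · have : ∑ y ∈ U, (T.filter fun u => g u = y).card = U.card * q := by
        rw [← hTsum, h3, h4, hcase, pow_succ]
      intro y hy
      rw [sum_const_eq_forall_eq hub this y hy, h4, h3, hcase, pow_succ, mul_comm]
  -- now the fiber of g∘f over g (f c)
  have hfc : g (f c) ∈ U := Finset.mem_image_of_mem g (Finset.mem_image_of_mem f hc)
  set t := T.filter (fun u => g u = g (f c)) with ht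
  have hsplit : (S.filter fun c' => g (f c') = g (f c)).card
      = ∑ u ∈ t, (S.filter fun c' => f c' = u).card := by
    have base : (S.filter fun c' => g (f c') = g (f c)).card
        = ∑ u ∈ t, (((S.filter fun c' => g (f c') = g (f c))).filter (fun c' => f c' = u)).card := by
      apply Finset.card_eq_sum_card_fiberwise
      intro c' hc'
      rcases Finset.mem_filter.1 hc' with ⟨hc'S, hgc'⟩
      exact Finset.mem_filter.2 ⟨Finset.mem_image_of_mem f hc'S, hgc'⟩
    rw [base]
    apply Finset.sum_congr rfl
    intro u hu
    congr 1
    ext c'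
    rcases Finset.mem_filter.1 hu with ⟨-, hgu⟩
    simp only [Finset.mem_filter, and_assoc]
    constructor
    · tauto
    · rintro ⟨h1', h2'⟩
      exact ⟨h1', by rw [h2', hgu], h2'⟩
  have hterm : ∀ u ∈ t, (S.filter fun c' => f c' = u).card * T.card = S.card := by
    intro u hu
    rcases Finset.mem_filter.1 hu with ⟨huT, -⟩
    rcases Finset.mem_image.1 huT with ⟨c₀, hc₀, rfl⟩
    exact h1 c₀ hc₀
  have hTpos : 0 < T.card := Finset.card_pos.2 ⟨f c, Finset.mem_image_of_mem f hc⟩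
  apply Nat.eq_of_mul_eq_mul_right hTpos
  have A : (∑ u ∈ t, (S.filter fun c' => f c' = u).card) * T.card = t.card * S.card := by
    rw [Finset.sum_mul, Finset.sum_congr rfl hterm, Finset.sum_const, smul_eq_mul]
  calc (S.filter fun c' => g (f c') = g (f c)).card * U.card * T.card
      = ((∑ u ∈ t, (S.filter fun c' => f c' = u).card) * T.card) * U.card := by
        rw [hsplit]; ring
    _ = (t.card * S.card) * U.card := by rw [A]
    _ = (t.card * U.card) * S.card := by ring
    _ = T.card * S.card := by rw [huniform _ hfc]
    _ = S.card * T.card := by ring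

end Aux

section Main

namespace Aux

open Submodule Module

variable {K L : Type} [Field K] [Fintype K] [Field L] [Fintype L] [Algebra K L]
variable {n : ℕ} (C : Set (Fin n → L))

lemma ncard_code : Nat.card C = (Set.toFinite C).toFinset.card := by
  rw [Nat.card_coe_set_eq, Set.ncard_eq_toFinset_card C (Set.toFinite C)]

lemma ncard_proj (p : Submodule L (Fin n → L)) [DecidableEq ((Fin n → L) ⧸ p)] :
    Nat.card (Submodule.Quotient.mk '' C : Set ((Fin n → L) ⧸ p)) =
      ((Set.toFinite C).toFinset.image
        (fun c => (Submodule.Quotient.mk c : (Fin n → L) ⧸ p))).card := by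
  rw [Nat.card_coe_set_eq]
  have : (Submodule.Quotient.mk '' C : Set ((Fin n → L) ⧸ p)) =
      ↑((Set.toFinite C).toFinset.image
        (fun c => (Submodule.Quotient.mk c : (Fin n → L) ⧸ p))) := by
    rw [Finset.coe_image, Set.Finite.coe_toFinset]
  rw [this, Set.ncard_coe_finset]

lemma ncard_fib (p : Submodule L (Fin n → L)) (x : Fin n → L)
    [DecidablePred fun c : Fin n → L => c - x ∈ p] :
    Nat.card {c | c ∈ C ∧ c - x ∈ p} =
      ((Set.toFinite C).toFinset.filter (fun c => c - x ∈ p)).card := by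
  rw [Nat.card_coe_set_eq]
  have : {c | c ∈ C ∧ c - x ∈ p} =
      ↑((Set.toFinite C).toFinset.filter (fun c => c - x ∈ p)) := by
    ext c
    simp [Set.Finite.mem_toFinset]
  rw [this, Set.ncard_coe_finset]

lemma top_case (p : Submodule L (Fin n → L)) (hp : p = ⊥) (x : Fin n → L) (hx : x ∈ C) :
    Nat.card {c | c ∈ C ∧ c - x ∈ p} *
      Nat.card (Submodule.Quotient.mk '' C : Set ((Fin n → L) ⧸ p)) = Nat.card C := by
  subst hp
  have h1 : {c | c ∈ C ∧ c - x ∈ (⊥ : Submodule L (Fin n → L))} = {x} := by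
    ext c
    simp only [Set.mem_setOf_eq, Submodule.mem_bot, sub_eq_zero, Set.mem_singleton_iff]
    constructor
    · rintro ⟨-, rfl⟩; rfl
    · rintro rfl; exact ⟨hx, rfl⟩
  have h2 : Function.Injective
      (Submodule.Quotient.mk : (Fin n → L) → (Fin n → L) ⧸ (⊥ : Submodule L (Fin n → L))) := by
    intro a b hab
    have := (Submodule.Quotient.eq (⊥ : Submodule L (Fin n → L))).1 hab
    simpa [sub_eq_zero] using this
  rw [h1]
  rw [Nat.card_coe_set_eq, Set.ncard_singleton, one_mul,
    Nat.card_coe_set_eq, Set.ncard_image_of_injective C h2, Nat.card_coe_set_eq]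

lemma ext_sup_le (A B' : Submodule K (Fin n → K)) :
    extScalars K L (A ⊔ B') ≤ extScalars K L A ⊔ extScalars K L B' := by
  apply Submodule.span_le.2
  rintro _ ⟨u, hu, rfl⟩
  rcases Submodule.mem_sup.1 hu with ⟨a, ha, b, hb, rfl⟩
  have : (fun j => algebraMap K L ((a + b) j)) =
      (fun j => algebraMap K L (a j)) + (fun j => algebraMap K L (b j)) := by
    funext j; simp
  show (fun j => algebraMap K L ((a + b) j)) ∈ extScalars K L A ⊔ extScalars K L B'
  rw [this]
  exact Submodule.add_mem _
    (Submodule.mem_sup_left (Submodule.subset_span ⟨a, ha, rfl⟩))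
    (Submodule.mem_sup_right (Submodule.subset_span ⟨b, hb, rfl⟩))

/-- existence of an element `w` spanning `stdPerp Z` over `stdPerp Z'`. -/
lemma exists_spanning_perp (Z : Submodule K (Fin n → K)) (v : Fin n → K) :
    ∃ w : Fin n → K, stdPerp K Z ≤ stdPerp K (Z ⊔ Submodule.span K {v}) ⊔
      Submodule.span K {w} := by
  have hperp' : stdPerp K (Z ⊔ Submodule.span K {v})
      = stdPerp K Z ⊓ LinearMap.ker (dotForm v) := by
    ext u
    constructor
    · intro hu
      refine ⟨fun t ht => hu t (Submodule.mem_sup_left ht), ?_⟩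
      have := hu v (Submodule.mem_sup_right (Submodule.subset_span rfl))
      simpa [LinearMap.mem_ker] using this
    · rintro ⟨hu1, hu2⟩ t ht
      rcases Submodule.mem_sup.1 ht with ⟨a, ha, b, hb, rfl⟩
      rcases Submodule.mem_span_singleton.1 hb with ⟨s, rfl⟩
      have hb0 : ∑ j, (s • v) j * u j = 0 := by
        have hv0 : ∑ j, v j * u j = 0 := by simpa [LinearMap.mem_ker] using hu2
        simp only [Pi.smul_apply, smul_eq_mul, mul_assoc]
        rw [← Finset.mul_sum, hv0, mul_zero]
      have : ∑ j, (a + s • v) j * u j = (∑ j, a j * u j) + ∑ j, (s • v) j * u j := by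
        simp [add_mul, Finset.sum_add_distrib]
      rw [this, hu1 a ha, hb0, add_zero]
  by_cases h : stdPerp K Z ≤ LinearMap.ker (dotForm v)
  · refine ⟨0, ?_⟩
    have : stdPerp K (Z ⊔ Submodule.span K {v}) = stdPerp K Z := by
      rw [hperp', inf_eq_left.2 h]
    rw [this]
    exact le_sup_left
  · rw [SetLike.not_le_iff_exists] at h
    obtain ⟨w, hwZ, hwk⟩ := h
    refine ⟨w, fun u hu => ?_⟩
    have hwv : dotForm v w ≠ 0 := by simpa [LinearMap.mem_ker] using hwk
    set s := dotForm v u / dotForm v w with hs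
    have h1 : u - s • w ∈ stdPerp K (Z ⊔ Submodule.span K {v}) := by
      rw [hperp']
      refine ⟨Submodule.sub_mem _ hu (Submodule.smul_mem _ _ hwZ), ?_⟩
      show u - s • w ∈ LinearMap.ker (dotForm v)
      rw [LinearMap.mem_ker, map_sub, map_smul]
      simp only [smul_eq_mul, hs]
      rw [div_mul_eq_mul_div, mul_div_assoc, div_self (by simpa using hwv), mul_one, sub_self]
    have : u = (u - s • w) + s • w := by ring_nf
    rw [this]
    exact Submodule.add_mem _ (Submodule.mem_sup_left h1)
      (Submodule.mem_sup_right (Submodule.mem_span_singleton.2 ⟨s, rfl⟩))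

end Aux

end Main

section Main2

namespace Aux

open Submodule Module

variable {K L : Type} [Field K] [Fintype K] [Field L] [Fintype L] [Algebra K L]
variable {n : ℕ} (C : Set (Fin n → L))

lemma fib_mul_ncard (hC : AlmostAffine K L C) :
    ∀ (k : ℕ) (Z : Submodule K (Fin n → K)), n - finrank K Z ≤ k →
    ∀ x ∈ C, Nat.card {c | c ∈ C ∧ c - x ∈ extScalars K L (stdPerp K Z)} *
      Nat.card (projImage K L C Z) = Nat.card C := by
  intro k
  induction k with
  | zero =>
    intro Z hZ x hx
    have h1 : finrank K Z ≤ n := by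
      have := Submodule.finrank_le Z
      rwa [Module.finrank_pi, Fintype.card_fin] at this
    have hZtop : Z = ⊤ := Submodule.eq_top_of_finrank_eq
      (by rw [Module.finrank_pi, Fintype.card_fin]; omega)
    subst hZtop
    exact top_case C (extScalars K L (stdPerp K (⊤ : Submodule K (Fin n → K)))) (by rw [stdPerp_top, extScalars_bot]) x hx
  | succ k IH =>
    intro Z hZ x hx
    by_cases htop : Z = ⊤
    · subst htop; exact top_case C (extScalars K L (stdPerp K (⊤ : Submodule K (Fin n → K)))) (by rw [stdPerp_top, extScalars_bot]) x hx
    classical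
    obtain ⟨v, hv⟩ : ∃ v, v ∉ Z := by
      by_contra h
      push_neg at h
      exact htop (Submodule.eq_top_iff'.2 h)
    set Z' := Z ⊔ Submodule.span K {v} with hZ'def
    have hvZ' : v ∈ Z' := Submodule.mem_sup_right (Submodule.subset_span rfl)
    have hlt : Z < Z' := lt_of_le_of_ne le_sup_left (by
      intro h; rw [← h] at hvZ'; exact hv hvZ')
    have hfrlt : finrank K Z < finrank K Z' := Submodule.finrank_lt_finrank_of_lt hlt
    have hfr : n - finrank K Z' ≤ k := by omega
    set p' := extScalars K L (stdPerp K Z') with hp'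
    set p := extScalars K L (stdPerp K Z) with hp
    have hle : p' ≤ p := extScalars_mono (stdPerp_antitone le_sup_left)
    set g : ((Fin n → L) ⧸ p') →ₗ[L] ((Fin n → L) ⧸ p) :=
      Submodule.mapQ p' p LinearMap.id hle with hg
    have hgmk : ∀ c : Fin n → L,
        g (Submodule.Quotient.mk c) = Submodule.Quotient.mk c := by
      intro c
      rw [hg, Submodule.mapQ_apply, LinearMap.id_apply]
    -- bound on the kernel of g
    obtain ⟨w, hw⟩ := exists_spanning_perp Z v
    set z : Fin n → L := fun j => algebraMap K L (w j) with hzdef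
    have hker : LinearMap.ker g ≤ Submodule.span L {Submodule.Quotient.mk z} := by
      intro u hu
      obtain ⟨m, rfl⟩ := Submodule.Quotient.mk_surjective p' u
      rw [LinearMap.mem_ker, hgmk] at hu
      have hm : m ∈ p := (Submodule.Quotient.mk_eq_zero p).1 hu
      have hchain : p ≤ p' ⊔ Submodule.span L {z} := by
        calc p ≤ extScalars K L (stdPerp K Z' ⊔ Submodule.span K {w}) :=
              extScalars_mono hw
          _ ≤ extScalars K L (stdPerp K Z') ⊔ extScalars K L (Submodule.span K {w}) :=
              ext_sup_le _ _
          _ ≤ p' ⊔ Submodule.span L {z} :=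
              sup_le_sup_left (extScalars_span_singleton_le w) _
      rcases Submodule.mem_sup.1 (hchain hm) with ⟨a, ha, b, hb, hab⟩
      rcases Submodule.mem_span_singleton.1 hb with ⟨l, rfl⟩
      have : (Submodule.Quotient.mk m : (Fin n → L) ⧸ p')
          = l • Submodule.Quotient.mk z := by
        rw [← hab, Submodule.Quotient.mk_add,
          (Submodule.Quotient.mk_eq_zero p').2 ha, zero_add,
          Submodule.Quotient.mk_smul]
      rw [this]
      exact Submodule.smul_mem _ _ (Submodule.subset_span rfl)
    have hq : 1 < Fintype.card L := Fintype.one_lt_card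
    have hkercard : Nat.card (LinearMap.ker g) ≤ Fintype.card L := by
      have step1 : Nat.card (LinearMap.ker g)
          ≤ Nat.card (Submodule.span L {(Submodule.Quotient.mk z : (Fin n → L) ⧸ p')}) :=
        Nat.card_le_card_of_injective (Submodule.inclusion hker)
          (Submodule.inclusion_injective hker)
      have step2 : Nat.card
          (Submodule.span L {(Submodule.Quotient.mk z : (Fin n → L) ⧸ p')})
          ≤ Nat.card L := by
        apply Nat.card_le_card_of_surjective
          (fun l : L => (⟨l • Submodule.Quotient.mk z,
            Submodule.smul_mem _ _ (Submodule.subset_span rfl)⟩ :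
            Submodule.span L {(Submodule.Quotient.mk z : (Fin n → L) ⧸ p')}))
        rintro ⟨u, hu⟩
        rcases Submodule.mem_span_singleton.1 hu with ⟨l, rfl⟩
        exact ⟨l, rfl⟩
      exact step1.trans (le_of_le_of_eq step2 Nat.card_eq_fintype_card)
    -- Finset setup
    set S := (Set.toFinite C).toFinset with hS
    set f : (Fin n → L) → ((Fin n → L) ⧸ p') := fun c => Submodule.Quotient.mk c with hf
    have hbridge : ∀ (q : Submodule L (Fin n → L)) (c : Fin n → L),
        (S.filter fun c' => (Submodule.Quotient.mk c' : (Fin n → L) ⧸ q)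
            = Submodule.Quotient.mk c).card
          = Nat.card {c' | c' ∈ C ∧ c' - c ∈ q} := by
      intro q c
      rw [ncard_fib C q c]
      congr 1
      apply Finset.filter_congr
      intro c' _
      exact Submodule.Quotient.eq q
    have h2 : ∀ c ∈ S, ((S.image f).filter fun u => g u = g (f c)).card
        ≤ Fintype.card L := by
      intro c hc
      set Kg := (Set.toFinite ((LinearMap.ker g : Set ((Fin n → L) ⧸ p')))).toFinset with hKg
      have hmap : ∀ u ∈ (S.image f).filter (fun u => g u = g (f c)), u - f c ∈ Kg := by
        intro u hu
        rcases Finset.mem_filter.1 hu with ⟨-, hgu⟩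
        rw [hKg, Set.Finite.mem_toFinset]
        show u - f c ∈ LinearMap.ker g
        rw [LinearMap.mem_ker, map_sub, hgu, sub_self]
      have hinj : Set.InjOn (fun u => u - f c)
          ((S.image f).filter (fun u => g u = g (f c))) := by
        intro u1 _ u2 _ h
        exact sub_left_inj.mp h
      have hcard := Finset.card_le_card_of_injOn (fun u => u - f c) hmap hinj
      refine hcard.trans ?_
      have hKgcard : Kg.card = Nat.card (LinearMap.ker g) := by
        rw [hKg, ← Set.ncard_eq_toFinset_card _ (Set.toFinite _), ← Nat.card_coe_set_eq]
        rfl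
      rw [hKgcard]
      exact hkercard
    have hcode : Nat.card C = S.card := by rw [ncard_code C, hS]
    have h1 : ∀ c ∈ S, (S.filter fun c' => f c' = f c).card * (S.image f).card
        = S.card := by
      intro c hc
      have hcC : c ∈ C := by rwa [hS, Set.Finite.mem_toFinset] at hc
      have key := IH Z' hfr c hcC
      rw [← hbridge p' c] at key
      have eproj : Nat.card (projImage K L C Z') = (S.image f).card :=
        ncard_proj C p'
      rw [eproj, hcode] at key
      exact key
    obtain ⟨a, ha⟩ := hC Z'
    obtain ⟨b, hb⟩ := hC Z
    have h3 : (S.image f).card = Fintype.card L ^ a := by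
      rw [← ha]
      exact (ncard_proj C p').symm
    have hcomp : (S.image f).image g = S.image
        (fun c => (Submodule.Quotient.mk c : (Fin n → L) ⧸ p)) := by
      rw [Finset.image_image]
      exact Finset.image_congr (fun c _ => hgmk c)
    have eprojZ : Nat.card (projImage K L C Z)
        = (S.image (fun c => (Submodule.Quotient.mk c : (Fin n → L) ⧸ p))).card := by
      exact ncard_proj C p
    have h4 : ((S.image f).image g).card = Fintype.card L ^ b := by
      rw [hcomp, ← eprojZ, hb]
    have hxS : x ∈ S := by rw [hS, Set.Finite.mem_toFinset]; exact hx
    have key := step_lemma S f g (Fintype.card L) a b hq h1 h2 h3 h4 x hxS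
    have hpred : (S.filter fun c' => g (f c') = g (f x))
        = (S.filter fun c' => (Submodule.Quotient.mk c' : (Fin n → L) ⧸ p)
            = Submodule.Quotient.mk x) := by
      apply Finset.filter_congr
      intro c' _
      rw [hf]
      simp only [hgmk]
    rw [hpred, hcomp] at key
    rw [← hbridge p x, eprojZ, hcode]
    exact key

end Aux

end Main2

section Final

namespace Aux

open Submodule Module

variable {K L : Type} [Field K] [Fintype K] [Field L] [Fintype L] [Algebra K L]
variable {n m : ℕ} (B : Basis (Fin m) K L) (C : Set (Fin n → L))

lemma ncard_proj_of_bot (p : Submodule L (Fin n → L)) (hp : p = ⊥) :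
    Nat.card (Submodule.Quotient.mk '' C : Set ((Fin n → L) ⧸ p)) = Nat.card C := by
  subst hp
  have h2 : Function.Injective
      (Submodule.Quotient.mk : (Fin n → L) → (Fin n → L) ⧸ (⊥ : Submodule L (Fin n → L))) := by
    intro a b hab
    have := (Submodule.Quotient.eq (⊥ : Submodule L (Fin n → L))).1 hab
    simpa [sub_eq_zero] using this
  rw [Nat.card_coe_set_eq, Set.ncard_image_of_injective C h2, Nat.card_coe_set_eq]

lemma proj_top_card : Nat.card (projImage K L C ⊤) = Nat.card C :=
  ncard_proj_of_bot C _ (by rw [stdPerp_top, extScalars_bot])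

lemma indep_iff (hC : AlmostAffine K L C) (x : Fin n → L) (hx : x ∈ C)
    (Y : Submodule K (Fin n → K)) :
    (finrank K Y + rho K L C (stdPerp K Y) - rho K L C ⊤ = finrank K Y) ↔
      ¬ ∃ c ∈ C, c ≠ x ∧ supp K L B (c - x) ≤ Y := by
  have hq : 1 < Fintype.card L := Fintype.one_lt_card
  obtain ⟨e, he⟩ := hC (stdPerp K Y)
  obtain ⟨gt', hg⟩ := hC (⊤ : Submodule K (Fin n → K))
  have hCcard : Nat.card C = Fintype.card L ^ gt' := by rw [← proj_top_card (K := K) C, hg]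
  have hrho1 : rho K L C (stdPerp K Y) = e := by
    unfold rho; rw [he, Nat.log_pow hq]
  have hrho2 : rho K L C (⊤ : Submodule K (Fin n → K)) = gt' := by
    unfold rho; rw [hg, Nat.log_pow hq]
  -- the fiber count
  have hfib := fib_mul_ncard C hC n (stdPerp K Y) (by omega) x hx
  have hcard_eq : Nat.card ↥{c | c ∈ C ∧ c - x ∈ extScalars K L (stdPerp K (stdPerp K Y))}
      = Nat.card ↥{c | c ∈ C ∧ c - x ∈ extScalars K L Y} :=
    congrArg (fun W : Submodule K (Fin n → K) =>
      Nat.card ↥{c | c ∈ C ∧ c - x ∈ extScalars K L W}) (stdPerp_stdPerp Y)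
  rw [hcard_eq] at hfib
  set F := Nat.card {c | c ∈ C ∧ c - x ∈ extScalars K L Y} with hF
  rw [he, hCcard] at hfib
  -- e ≤ gt'
  have hle : e ≤ gt' := by
    rw [← Nat.pow_le_pow_iff_right hq, ← he, ← hCcard]
    have : Finite C := Set.toFinite C
    calc Nat.card (projImage K L C (stdPerp K Y)) ≤ Nat.card C := by
          rw [Nat.card_coe_set_eq, Nat.card_coe_set_eq]
          exact Set.ncard_image_le (Set.toFinite C)
      _ = Nat.card C := rfl
  -- the set contains x
  have hxmem : x ∈ {c | c ∈ C ∧ c - x ∈ extScalars K L Y} := by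
    refine ⟨hx, ?_⟩
    rw [sub_self]
    exact Submodule.zero_mem _
  have hFfin : {c | c ∈ C ∧ c - x ∈ extScalars K L Y}.Finite := Set.toFinite _
  have hF1 : 1 ≤ F := by
    rw [hF, Nat.card_coe_set_eq]
    exact (Set.ncard_pos hFfin).2 ⟨x, hxmem⟩
  -- D ↔ 1 < F
  have hD_iff : (∃ c ∈ C, c ≠ x ∧ supp K L B (c - x) ≤ Y) ↔ 1 < F := by
    constructor
    · rintro ⟨c, hcC, hcx, hsupp⟩
      have hcmem : c ∈ {c | c ∈ C ∧ c - x ∈ extScalars K L Y} :=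
        ⟨hcC, (mem_extScalars_iff_supp_le B).2 hsupp⟩
      rw [hF, Nat.card_coe_set_eq]
      exact (Set.one_lt_ncard_iff hFfin).2 ⟨c, x, hcmem, hxmem, hcx⟩
    · intro h1F
      rw [hF, Nat.card_coe_set_eq] at h1F
      obtain ⟨c1, c2, hc1, hc2, hne⟩ := (Set.one_lt_ncard_iff hFfin).1 h1F
      by_cases h : c1 = x
      · subst h
        exact ⟨c2, hc2.1, fun h' => hne h'.symm, (mem_extScalars_iff_supp_le B).1 hc2.2⟩
      · exact ⟨c1, hc1.1, h, (mem_extScalars_iff_supp_le B).1 hc1.2⟩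
  rw [hrho1, hrho2]
  constructor
  · intro hE
    have hcases : e = gt' ∨ finrank K Y = 0 := by omega
    rcases hcases with heg | hY0
    · -- F = 1
      have hpow : F * Fintype.card L ^ e = 1 * Fintype.card L ^ e := by
        rw [hfib, heg, one_mul]
      have hFone : F = 1 := Nat.eq_of_mul_eq_mul_right (Nat.pow_pos (by omega)) hpow
      rw [hD_iff]
      omega
    · -- Y = ⊥
      have hYbot : Y = ⊥ := Submodule.finrank_eq_zero.1 hY0
      rintro ⟨c, hcC, hcx, hsupp⟩
      rw [hYbot] at hsupp
      have : c - x ∈ extScalars K L (⊥ : Submodule K (Fin n → K)) :=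
        (mem_extScalars_iff_supp_le B).2 hsupp
      rw [extScalars_bot] at this
      exact hcx (by simpa [sub_eq_zero] using this)
  · intro hno
    have hFone : F = 1 := by
      rw [hD_iff] at hno
      omega
    rw [hFone, one_mul] at hfib
    have : e = gt' := Nat.pow_right_injective hq hfib
    omega

theorem main_statement (hC : AlmostAffine K L C) (x : Fin n → L) (hx : x ∈ C) :
    (∀ Y : Submodule K (Fin n → K),
      (finrank K Y + rho K L C (stdPerp K Y) - rho K L C ⊤ = finrank K Y) ↔
        ¬ ∃ c ∈ C, c ≠ x ∧ supp K L B (c - x) ≤ Y) ∧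
    (∀ C' : Submodule K (Fin n → K),
      ((¬ (finrank K C' + rho K L C (stdPerp K C') - rho K L C ⊤ = finrank K C')) ∧
        ∀ Y : Submodule K (Fin n → K), Y < C' →
          finrank K Y + rho K L C (stdPerp K Y) - rho K L C ⊤ = finrank K Y) ↔
        ∃ c ∈ C, c ≠ x ∧
          (¬ ∃ c' ∈ C, c' ≠ x ∧ supp K L B (c' - x) < supp K L B (c - x)) ∧
          supp K L B (c - x) = C') := by
  have part1 := indep_iff B C hC x hx
  refine ⟨part1, ?_⟩
  intro C'
  constructor
  · rintro ⟨hdep, hproper⟩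
    rw [part1 C', not_not] at hdep
    obtain ⟨c, hcC, hcx, hle⟩ := hdep
    have heq : supp K L B (c - x) = C' := by
      by_contra hne
      have hlt : supp K L B (c - x) < C' := lt_of_le_of_ne hle hne
      have := (part1 _).1 (hproper _ hlt)
      exact this ⟨c, hcC, hcx, le_refl _⟩
    refine ⟨c, hcC, hcx, ?_, heq⟩
    rintro ⟨c', hc'C, hc'x, hlt⟩
    rw [heq] at hlt
    have := (part1 _).1 (hproper _ hlt)
    exact this ⟨c', hc'C, hc'x, le_refl _⟩
  · rintro ⟨c, hcC, hcx, hmin, heq⟩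
    constructor
    · rw [part1 C', not_not]
      exact ⟨c, hcC, hcx, heq ▸ le_refl _⟩
    · intro Y hY
      rw [part1 Y]
      rintro ⟨c', hc'C, hc'x, hle⟩
      exact hmin ⟨c', hc'C, hc'x, by rw [heq]; exact lt_of_le_of_lt hle hY⟩

end Aux

end Final


/-- a subspace `Y` is independent in the dual q-matroid `M_C*` iff no codeword
`c ≠ x` has `supp(c−x) ≤ Y`; consequently, circuits of `M_C*` are exactly the supports of
`x`-minimal codewords. -/
theorem stmt_14 {K L : Type} [Field K] [Fintype K] [Field L] [Fintype L] [Algebra K L]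
    {m n : ℕ} (B : Basis (Fin m) K L) (C : Set (Fin n → L)) (hC : AlmostAffine K L C)
    (x : Fin n → L) (hx : x ∈ C) :
    (∀ Y : Submodule K (Fin n → K),
      (finrank K Y + rho K L C (stdPerp K Y) - rho K L C ⊤ = finrank K Y) ↔
        ¬ ∃ c ∈ C, c ≠ x ∧ supp K L B (c - x) ≤ Y) ∧
    (∀ C' : Submodule K (Fin n → K),
      ((¬ (finrank K C' + rho K L C (stdPerp K C') - rho K L C ⊤ = finrank K C')) ∧
        ∀ Y : Submodule K (Fin n → K), Y < C' →
          finrank K Y + rho K L C (stdPerp K Y) - rho K L C ⊤ = finrank K Y) ↔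
        ∃ c ∈ C, c ≠ x ∧
          (¬ ∃ c' ∈ C, c' ≠ x ∧ supp K L B (c' - x) < supp K L B (c - x)) ∧
          supp K L B (c - x) = C') := by
  exact Aux.main_statement B C hC x hx
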